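/- Local lower bound for the fundamental solution: set ρ_λ = √(λ d log λ / (λ² − 1)) and T_λ = min{(2Cλ^d)^{−2/α}, T}, where C = C(λ,α,d,T) is the constant in the estimate |J(t,x;τ,ξ)| ≤ C (t−τ)^{α/2} Γ^{λ}(t−τ,x−ξ) for the correction term J = Γ − Z. Then the fundamental solution Γ of L_t − ∂_t satisfies Γ(t,x;τ,ξ) ≥ (1/(2λ^d)) Γ^{1/λ}(t−τ, x−ξ) whenever 0 < t − τ ≤ T_λ and |x − ξ| ≤ ρ_λ √(t−τ). -/

import Mathlib

open MeasureTheory Real Set Filter Topology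

noncomputable section

abbrev Euc (d : ℕ) := EuclideanSpace ℝ (Fin d)

variable {d : ℕ}

/-- Partial derivative in direction `i`. -/
def pd (i : Fin d) (f : Euc d → ℝ) (x : Euc d) : ℝ :=
  fderiv ℝ f x (EuclideanSpace.single i 1)

/-- Second partial derivative `∂_i ∂_j`. -/
def pd2 (i j : Fin d) (f : Euc d → ℝ) (x : Euc d) : ℝ :=
  pd i (pd j f) x

/-- The parabolic operator `L_t`. -/
def Lop (a : ℝ → Euc d → Fin d → Fin d → ℝ) (b : ℝ → Euc d → Fin d → ℝ)
    (c : ℝ → Euc d → ℝ) (t : ℝ) (u : Euc d → ℝ) (x : Euc d) : ℝ :=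
  (1 / 2) * ∑ i, ∑ j, a t x i j * pd2 i j u x + ∑ i, b t x i * pd i u x + c t x * u x

/-- Gaussian heat kernel `Γ^μ(t,x)`. -/
def heatK (d : ℕ) (μ t : ℝ) (x : Euc d) : ℝ :=
  (2 * π * μ * t) ^ (-(d : ℝ) / 2) * Real.exp (-‖x‖ ^ 2 / (2 * μ * t))

def NonRapidInc (φ : Euc d → ℝ) : Prop :=
  ∀ δ > 0, ∃ M, ∀ x : Euc d, |φ x| * Real.exp (-δ * ‖x‖ ^ 2) ≤ M

def NonRapidIncUnif (τ T : ℝ) (f : ℝ → Euc d → ℝ) : Prop :=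
  ∀ δ > 0, ∃ M, ∀ t ∈ Icc τ T, ∀ x : Euc d, |f t x| * Real.exp (-δ * ‖x‖ ^ 2) ≤ M

def UnifHolder (T al : ℝ) (f : ℝ → Euc d → ℝ) : Prop :=
  ∃ K, ∀ t ∈ Icc 0 T, ∀ x y : Euc d, |f t x - f t y| ≤ K * ‖x - y‖ ^ al

def LocHolder (T al : ℝ) (f : ℝ → Euc d → ℝ) : Prop :=
  ∀ K : Set (Euc d), IsCompact K →
    ∃ C, ∀ t ∈ Icc 0 T, ∀ x ∈ K, ∀ y ∈ K, |f t x - f t y| ≤ C * ‖x - y‖ ^ al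

/-- Standing assumptions on the coefficients. -/
structure Coeffs (d : ℕ) (T lam al : ℝ) (a : ℝ → Euc d → Fin d → Fin d → ℝ)
    (b : ℝ → Euc d → Fin d → ℝ) (c : ℝ → Euc d → ℝ) : Prop where
  symm : ∀ t x i j, a t x i j = a t x j i
  meas_a : ∀ x i j, Measurable fun t => a t x i j
  meas_b : ∀ x i, Measurable fun t => b t x i
  meas_c : ∀ x, Measurable fun t => c t x
  coercive_lower : ∀ t ∈ Icc (0 : ℝ) T, ∀ x ξ : Euc d,
    lam⁻¹ * ‖ξ‖ ^ 2 ≤ ∑ i, ∑ j, a t x i j * ξ i * ξ j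
  coercive_upper : ∀ t ∈ Icc (0 : ℝ) T, ∀ x ξ : Euc d,
    ∑ i, ∑ j, a t x i j * ξ i * ξ j ≤ lam * ‖ξ‖ ^ 2
  bdd_a : ∀ t ∈ Icc (0 : ℝ) T, ∀ x, ∀ i j, |a t x i j| ≤ lam
  bdd_b : ∀ t ∈ Icc (0 : ℝ) T, ∀ x, ∀ i, |b t x i| ≤ lam
  bdd_c : ∀ t ∈ Icc (0 : ℝ) T, ∀ x, |c t x| ≤ lam
  holder_a : ∀ i j, UnifHolder T al fun t x => a t x i j
  holder_b : ∀ i, LocHolder T al fun t x => b t x i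
  holder_c : LocHolder T al c

/-- Fundamental solution of `L_t - ∂_t`. -/
structure IsFundSol (d : ℕ) (T : ℝ) (a : ℝ → Euc d → Fin d → Fin d → ℝ)
    (b : ℝ → Euc d → Fin d → ℝ) (c : ℝ → Euc d → ℝ)
    (Γ : ℝ → Euc d → ℝ → Euc d → ℝ) : Prop where
  smooth : ∀ τ ∈ Ico (0 : ℝ) T, ∀ ξ : Euc d, ∀ t ∈ Ioc τ T,
    ContDiff ℝ 2 fun x => Γ t x τ ξ
  meas : ∀ τ ∈ Ico (0 : ℝ) T, ∀ ξ x : Euc d,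
    Measurable (fun t => Γ t x τ ξ) ∧
    (∀ i, Measurable fun t => pd i (fun y => Γ t y τ ξ) x) ∧
    (∀ i j, Measurable fun t => pd2 i j (fun y => Γ t y τ ξ) x)
  eqn : ∀ τ ∈ Ico (0 : ℝ) T, ∀ ξ : Euc d, ∀ t₀ t : ℝ, τ < t₀ → t₀ ≤ t → t ≤ T → ∀ x,
    Γ t x τ ξ = Γ t₀ x τ ξ + ∫ s in t₀..t, Lop a b c s (fun y => Γ s y τ ξ) x
  init : ∀ τ ∈ Ico (0 : ℝ) T, ∀ ξ : Euc d, ∀ φ : Euc d → ℝ, Continuous φ → NonRapidInc φ →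
    Tendsto (fun p : ℝ × Euc d => ∫ y, Γ p.1 p.2 τ y * φ y)
      (𝓝[{p : ℝ × Euc d | τ < p.1}] (τ, ξ)) (𝓝 (φ ξ))

/-- Time-integrated coefficient matrix `A_{τ,t}(y)`. -/
def Amat (a : ℝ → Euc d → Fin d → Fin d → ℝ) (τ t : ℝ) (y : Euc d) :
    Matrix (Fin d) (Fin d) ℝ :=
  Matrix.of fun i j => ∫ s in τ..t, a s y i j

/-- Gaussian kernel with covariance matrix `A`. -/
def gaussK (d : ℕ) (A : Matrix (Fin d) (Fin d) ℝ) (x : Euc d) : ℝ :=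
  ((2 * π) ^ d * A.det) ^ (-(1 : ℝ) / 2) *
    Real.exp (-dotProduct (A⁻¹.mulVec fun i => x i) (fun i => x i) / 2)

/-- The parametrix `Z(t,x;τ,ξ)`. -/
def Zker (a : ℝ → Euc d → Fin d → Fin d → ℝ) (t : ℝ) (x : Euc d) (τ : ℝ) (ξ : Euc d) : ℝ :=
  gaussK d (Amat a τ t ξ) (x - ξ)

/-- The frozen operator `L_{t,y}`. -/
def Lfr (a : ℝ → Euc d → Fin d → Fin d → ℝ) (t : ℝ) (y : Euc d)
    (u : Euc d → ℝ) (x : Euc d) : ℝ :=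
  (1 / 2) * ∑ i, ∑ j, a t y i j * pd2 i j u x

/-- `H Z(t,x;τ,ξ) = (L_t - L_{t,ξ}) Z(t,x;τ,ξ)`. -/
def HZ (a : ℝ → Euc d → Fin d → Fin d → ℝ) (b : ℝ → Euc d → Fin d → ℝ)
    (c : ℝ → Euc d → ℝ) (t : ℝ) (x : Euc d) (τ : ℝ) (ξ : Euc d) : ℝ :=
  Lop a b c t (fun z => Zker a t z τ ξ) x - Lfr a t ξ (fun z => Zker a t z τ ξ) x

/-- Parametrix iterates: `HZiter a b c (k-1) = (H Z)_k`. -/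
def HZiter (a : ℝ → Euc d → Fin d → Fin d → ℝ) (b : ℝ → Euc d → Fin d → ℝ)
    (c : ℝ → Euc d → ℝ) : ℕ → ℝ → Euc d → ℝ → Euc d → ℝ
  | 0 => HZ a b c
  | k + 1 => fun t x τ ξ => ∫ s in τ..t, ∫ y, HZ a b c t x s y * HZiter a b c k s y τ ξ

/-- `Φ = Σ_{k≥1} (H Z)_k`. -/
def Phi (a : ℝ → Euc d → Fin d → Fin d → ℝ) (b : ℝ → Euc d → Fin d → ℝ)
    (c : ℝ → Euc d → ℝ) (t : ℝ) (x : Euc d) (τ : ℝ) (ξ : Euc d) : ℝ :=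
  ∑' k : ℕ, HZiter a b c k t x τ ξ

/-- Correction term `J`. -/
def Jker (a : ℝ → Euc d → Fin d → Fin d → ℝ) (b : ℝ → Euc d → Fin d → ℝ)
    (c : ℝ → Euc d → ℝ) (t : ℝ) (x : Euc d) (τ : ℝ) (ξ : Euc d) : ℝ :=
  ∫ s in τ..t, ∫ y, Zker a t x s y * Phi a b c s y τ ξ

/-- The fundamental solution constructed by the parametrix method: `Γ = Z + J`. -/
def Gpar (a : ℝ → Euc d → Fin d → Fin d → ℝ) (b : ℝ → Euc d → Fin d → ℝ)
    (c : ℝ → Euc d → ℝ) (t : ℝ) (x : Euc d) (τ : ℝ) (ξ : Euc d) : ℝ :=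
  Zker a t x τ ξ + Jker a b c t x τ ξ


section AuxStmt16

variable {T lam al : ℝ} {a : ℝ → Euc d → Fin d → Fin d → ℝ} {b : ℝ → Euc d → Fin d → ℝ}
  {c : ℝ → Euc d → ℝ}

lemma aInt_stmt16 (hco : Coeffs d T lam al a b c) {τ t : ℝ} (hτ : 0 ≤ τ) (hτt : τ ≤ t)
    (ht : t ≤ T) (ξ : Euc d) (i j : Fin d) :
    IntervalIntegrable (fun s => a s ξ i j) volume τ t := by
  apply IntervalIntegrable.mono_fun' (g := fun _ => lam) intervalIntegrable_const
    (hco.meas_a ξ i j).aestronglyMeasurable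
  filter_upwards [MeasureTheory.ae_restrict_mem measurableSet_uIoc] with s hs
  rw [Set.uIoc_of_le hτt] at hs
  have hs' : s ∈ Icc 0 T := ⟨hτ.trans hs.1.le, hs.2.trans ht⟩
  simpa [Real.norm_eq_abs] using hco.bdd_a s hs' ξ i j

set_option maxHeartbeats 1000000 in
lemma quadForm_stmt16 (hco : Coeffs d T lam al a b c) {τ t : ℝ} (hτ : 0 ≤ τ) (hτt : τ ≤ t)
    (ht : t ≤ T) (ξ : Euc d) (w : Fin d → ℝ) :
    lam⁻¹ * ((t - τ) * ∑ i, w i ^ 2) ≤ dotProduct w ((Amat a τ t ξ).mulVec w) ∧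
      dotProduct w ((Amat a τ t ξ).mulVec w) ≤ lam * ((t - τ) * ∑ i, w i ^ 2) := by
  set wE : Euc d := (WithLp.equiv 2 (∀ _ : Fin d, ℝ)).symm w with hwE
  have hwEa : ∀ i, wE i = w i := fun i => rfl
  have hnorm : ‖wE‖ ^ 2 = ∑ i, w i ^ 2 := by
    rw [EuclideanSpace.norm_eq, Real.sq_sqrt (by positivity)]
    simp [hwEa, sq_abs]
  have hint : ∀ i j : Fin d,
      IntervalIntegrable (fun s => a s ξ i j * w i * w j) volume τ t := fun i j => by
    simpa [mul_assoc] using (aInt_stmt16 hco hτ hτt ht ξ i j).mul_const (w i * w j)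
  have hintrow : ∀ i : Fin d,
      IntervalIntegrable (fun s => ∑ j, a s ξ i j * w i * w j) volume τ t := by
    intro i
    have := IntervalIntegrable.sum (μ := volume) (a := τ) (b := t) Finset.univ
      (f := fun j s => a s ξ i j * w i * w j) (fun j _ => hint i j)
    simpa only [Finset.sum_fn] using this
  have hintsum : IntervalIntegrable (fun s => ∑ i, ∑ j, a s ξ i j * w i * w j) volume τ t := by
    have := IntervalIntegrable.sum (μ := volume) (a := τ) (b := t) Finset.univ
      (f := fun i s => ∑ j, a s ξ i j * w i * w j) (fun i _ => hintrow i)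
    simpa only [Finset.sum_fn] using this
  have key : dotProduct w ((Amat a τ t ξ).mulVec w)
      = ∫ s in τ..t, ∑ i, ∑ j, a s ξ i j * w i * w j := by
    rw [intervalIntegral.integral_finset_sum (fun i _ => hintrow i)]
    have : ∀ i : Fin d, (∫ s in τ..t, ∑ j, a s ξ i j * w i * w j)
        = ∑ j, (∫ s in τ..t, a s ξ i j) * (w i * w j) := by
      intro i
      rw [intervalIntegral.integral_finset_sum (fun j _ => hint i j)]
      exact Finset.sum_congr rfl fun j _ => by
        rw [← intervalIntegral.integral_mul_const]; simp [mul_assoc]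
    simp only [this]
    simp [dotProduct, Matrix.mulVec, Amat, Finset.mul_sum]
    exact Finset.sum_congr rfl fun i _ => Finset.sum_congr rfl fun j _ => by ring
  constructor
  · rw [key]
    have hmono := intervalIntegral.integral_mono_on hτt
      (intervalIntegrable_const (c := lam⁻¹ * ∑ i, w i ^ 2)) hintsum (fun s hs => by
        have hs' : s ∈ Icc 0 T := ⟨hτ.trans hs.1, hs.2.trans ht⟩
        have := hco.coercive_lower s hs' ξ wE
        rw [hnorm] at this
        simpa [hwEa] using this)
    rw [intervalIntegral.integral_const] at hmono
    calc lam⁻¹ * ((t - τ) * ∑ i, w i ^ 2) = (t - τ) • (lam⁻¹ * ∑ i, w i ^ 2) := by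
          simp [smul_eq_mul]; ring
      _ ≤ _ := hmono
  · rw [key]
    have hmono := intervalIntegral.integral_mono_on hτt hintsum
      (intervalIntegrable_const (c := lam * ∑ i, w i ^ 2)) (fun s hs => by
        have hs' : s ∈ Icc 0 T := ⟨hτ.trans hs.1, hs.2.trans ht⟩
        have := hco.coercive_upper s hs' ξ wE
        rw [hnorm] at this
        simpa [hwEa] using this)
    rw [intervalIntegral.integral_const] at hmono
    calc (∫ s in τ..t, ∑ i, ∑ j, a s ξ i j * w i * w j) ≤ (t - τ) • (lam * ∑ i, w i ^ 2) := hmono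
      _ = lam * ((t - τ) * ∑ i, w i ^ 2) := by simp [smul_eq_mul]; ring

end AuxStmt16

set_option maxHeartbeats 2000000 in
/-- (Local lower bound for the fundamental solution constructed by the
parametrix method: `Γ ≥ (2λ^d)⁻¹ Γ^{1/λ}` on the parabolic cone
`|x−ξ| ≤ ρ_λ √(t−τ)`, `0 < t−τ ≤ T_λ = min{(2Cλ^d)^{−2/α}, T}`, where `C` is the
constant in the Gaussian estimate for the correction term `J = Γ − Z`). -/
theorem stmt_16 (d : ℕ) (hd : 1 ≤ d) (T lam al : ℝ) (hT : 0 < T) (hlam : 1 < lam)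
    (hal : al ∈ Ioo (0 : ℝ) 1)
    (a : ℝ → Euc d → Fin d → Fin d → ℝ) (b : ℝ → Euc d → Fin d → ℝ) (c : ℝ → Euc d → ℝ)
    (hco : Coeffs d T lam al a b c)
    (C : ℝ) (hC : 0 < C)
    (hJ : ∀ τ t : ℝ, 0 ≤ τ → τ < t → t ≤ T → ∀ x ξ : Euc d,
      |Jker a b c t x τ ξ| ≤ C * (t - τ) ^ (al / 2) * heatK d lam (t - τ) (x - ξ)) :
    ∀ τ t : ℝ, 0 ≤ τ → τ < t → t ≤ T →
      t - τ ≤ min ((2 * C * lam ^ d) ^ (-(2 : ℝ) / al)) T →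
      ∀ x ξ : Euc d,
        ‖x - ξ‖ ≤ Real.sqrt (lam * d * Real.log lam / (lam ^ 2 - 1)) * Real.sqrt (t - τ) →
        (2 * lam ^ d)⁻¹ * heatK d lam⁻¹ (t - τ) (x - ξ) ≤ Gpar a b c t x τ ξ := by
  have hlam0 : (0:ℝ) < lam := lt_trans one_pos hlam
  intro τ t hτ hlt hle hTl x ξ hcone
  set s : ℝ := t - τ with hsdef
  have hs : 0 < s := sub_pos.2 hlt
  set A : Matrix (Fin d) (Fin d) ℝ := Amat a τ t ξ with hAdef
  have hA : A.IsHermitian := by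
    ext i j
    simp only [Matrix.conjTranspose_apply, hAdef, Amat, Matrix.of_apply, star_trivial]
    exact intervalIntegral.integral_congr (fun r _ => hco.symm r ξ j i)
  -- eigenvalue bounds
  have hnorm1 : ∀ i, ∑ k, hA.eigenvectorBasis i k ^ 2 = 1 := by
    intro i
    have h1 : ‖hA.eigenvectorBasis i‖ = 1 := hA.eigenvectorBasis.orthonormal.1 i
    rw [EuclideanSpace.norm_eq] at h1
    have h2 := congrArg (· ^ 2) h1
    simp only [one_pow] at h2
    rw [Real.sq_sqrt (by positivity)] at h2
    simpa [sq_abs] using h2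
  have heig : ∀ i, lam⁻¹ * s ≤ hA.eigenvalues i ∧ hA.eigenvalues i ≤ lam * s := by
    intro i
    have he := hA.eigenvalues_eq i
    simp only [star_trivial, RCLike.re_to_real] at he
    have hq := quadForm_stmt16 hco hτ hlt.le hle ξ (⇑(hA.eigenvectorBasis i))
    rw [hnorm1 i, ← hAdef, ← hsdef] at hq
    rw [he]
    constructor
    · simpa [mul_one] using hq.1
    · simpa [mul_one] using hq.2
  have heigpos : ∀ i, 0 < hA.eigenvalues i := fun i =>
    lt_of_lt_of_le (by positivity) (heig i).1
  have hdet : A.det = ∏ i, hA.eigenvalues i := by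
    simpa using hA.det_eq_prod_eigenvalues
  have hdetpos : 0 < A.det := by
    rw [hdet]; exact Finset.prod_pos (fun i _ => heigpos i)
  have hdetle : A.det ≤ (lam * s) ^ d := by
    rw [hdet]
    calc ∏ i, hA.eigenvalues i ≤ ∏ _i : Fin d, (lam * s) :=
          Finset.prod_le_prod (fun i _ => (heigpos i).le) (fun i _ => (heig i).2)
      _ = (lam * s) ^ d := by simp [Finset.prod_const]
  -- quadratic form bound for the inverse
  have hR : ∑ i, (x - ξ) i ^ 2 = ‖x - ξ‖ ^ 2 := by
    rw [EuclideanSpace.norm_eq, Real.sq_sqrt (by positivity)]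
    simp [sq_abs]
  have hRnn : (0:ℝ) ≤ ‖x - ξ‖ ^ 2 := by positivity
  set vf : Fin d → ℝ := fun i => (x - ξ) i with hvf
  set u : Fin d → ℝ := A⁻¹.mulVec vf with hu
  have hAu : A.mulVec u = vf := by
    rw [hu, Matrix.mulVec_mulVec, Matrix.mul_nonsing_inv _ (isUnit_iff_ne_zero.2 hdetpos.ne'),
      Matrix.one_mulVec]
  set q : ℝ := dotProduct u vf with hqdef
  have hqle : q ≤ lam * ‖x - ξ‖ ^ 2 / s := by
    rcases le_or_gt q 0 with h | h
    · exact h.trans (by positivity)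
    · have hquad := (quadForm_stmt16 hco hτ hlt.le hle ξ u).1
      rw [← hAdef, ← hsdef, hAu, ← hqdef] at hquad
      have hU0 : (0:ℝ) ≤ ∑ i, u i ^ 2 :=
        Finset.sum_nonneg (fun i _ => sq_nonneg (u i))
      have hsU : s * ∑ i, u i ^ 2 ≤ lam * q := by
        have h2 := mul_le_mul_of_nonneg_left hquad hlam0.le
        calc s * ∑ i, u i ^ 2 = lam * (lam⁻¹ * (s * ∑ i, u i ^ 2)) := by
              field_simp
          _ ≤ lam * q := h2
      have hCS : q ^ 2 ≤ (∑ i, u i ^ 2) * (∑ i, vf i ^ 2) := by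
        simpa [hqdef, dotProduct] using Finset.sum_mul_sq_le_sq_mul_sq Finset.univ u vf
      have hRvf : ∑ i, vf i ^ 2 = ‖x - ξ‖ ^ 2 := hR
      rw [hRvf] at hCS
      rw [le_div_iff₀ hs]
      nlinarith [mul_le_mul_of_nonneg_right hsU hRnn,
        mul_le_mul_of_nonneg_right hCS hs.le]
  -- prefactor manipulations
  have hrpow_pow : ∀ y : ℝ, 0 < y → ((y ^ d : ℝ)) ^ (-(1:ℝ)/2) = y ^ (-(d:ℝ)/2) := by
    intro y hy
    rw [← Real.rpow_natCast y d, ← Real.rpow_mul hy.le]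
    congr 1; ring
  have hsplit : (2*π*(lam*s)) ^ (-(d:ℝ)/2) = ((lam:ℝ) ^ d)⁻¹ * (2*π*lam⁻¹*s) ^ (-(d:ℝ)/2) := by
    have h1 : 2*π*(lam*s) = lam^2 * (2*π*lam⁻¹*s) := by
      field_simp
    rw [h1, Real.mul_rpow (by positivity) (by positivity)]
    congr 1
    rw [← Real.rpow_natCast lam 2, ← Real.rpow_mul hlam0.le]
    rw [show ((2:ℕ):ℝ) * (-(d:ℝ)/2) = -(d:ℝ) by push_cast; ring]
    rw [Real.rpow_neg hlam0.le, Real.rpow_natCast]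
  set G : ℝ := heatK d lam⁻¹ s (x - ξ) with hGdef
  have hGpos : 0 < G := by
    rw [hGdef, heatK]
    have : (0:ℝ) < 2 * π * lam⁻¹ * s := by positivity
    positivity
  -- lower bound for Z
  have hZ : ((lam:ℝ) ^ d)⁻¹ * G ≤ Zker a t x τ ξ := by
    have hZeq : Zker a t x τ ξ = ((2*π)^d * A.det) ^ (-(1:ℝ)/2) * Real.exp (-q/2) := by
      rw [Zker, gaussK, ← hAdef, ← hvf, ← hu, ← hqdef]
    have hpre : (2*π*(lam*s)) ^ (-(d:ℝ)/2) ≤ ((2*π)^d * A.det) ^ (-(1:ℝ)/2) := by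
      rw [← hrpow_pow _ (by positivity)]
      apply Real.rpow_le_rpow_of_nonpos (by positivity)
      · calc (2*π)^d * A.det ≤ (2*π)^d * (lam*s)^d := by
              have h2 : (0:ℝ) ≤ (2*π)^d := by positivity
              exact mul_le_mul_of_nonneg_left hdetle h2
          _ = (2*π*(lam*s))^d := by rw [← mul_pow]
      · norm_num
    have hexp : Real.exp (-‖x - ξ‖^2 / (2*lam⁻¹*s)) ≤ Real.exp (-q/2) := by
      apply Real.exp_le_exp.2
      have h1 : -‖x - ξ‖^2 / (2*lam⁻¹*s) = -(lam * ‖x - ξ‖^2 / s)/2 := by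
        rw [div_eq_div_iff (by positivity) (by norm_num)]
        field_simp
      rw [h1]
      linarith [hqle]
    rw [hZeq, hGdef]
    show ((lam:ℝ)^d)⁻¹ * ((2*π*lam⁻¹*s) ^ (-(d:ℝ)/2) * Real.exp (-‖x - ξ‖^2 / (2*lam⁻¹*s))) ≤ _
    calc ((lam:ℝ)^d)⁻¹ * ((2*π*lam⁻¹*s) ^ (-(d:ℝ)/2) * Real.exp (-‖x - ξ‖^2 / (2*lam⁻¹*s)))
        = (2*π*(lam*s)) ^ (-(d:ℝ)/2) * Real.exp (-‖x - ξ‖^2 / (2*lam⁻¹*s)) := by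
          rw [hsplit]; ring
      _ ≤ ((2*π)^d * A.det) ^ (-(1:ℝ)/2) * Real.exp (-q/2) :=
          mul_le_mul hpre hexp (Real.exp_pos _).le (by positivity)
  -- cone bound
  have hlam21 : (0:ℝ) < lam^2 - 1 := by nlinarith
  have hlog : (0:ℝ) ≤ Real.log lam := Real.log_nonneg hlam.le
  have hrho : (0:ℝ) ≤ lam * d * Real.log lam / (lam^2 - 1) := by positivity
  have hRcone : ‖x - ξ‖^2 ≤ lam * d * Real.log lam / (lam^2 - 1) * s := by
    calc ‖x - ξ‖^2 ≤ (Real.sqrt (lam * d * Real.log lam / (lam^2 - 1)) * Real.sqrt s)^2 :=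
          pow_le_pow_left₀ (norm_nonneg _) hcone 2
      _ = lam * d * Real.log lam / (lam^2 - 1) * s := by
          rw [mul_pow, Real.sq_sqrt hrho, Real.sq_sqrt hs.le]
  -- heat kernel comparison
  have hHeat : heatK d lam s (x - ξ) ≤ G := by
    have harg : lam * ‖x - ξ‖^2 / (2*s) - ‖x - ξ‖^2/(2*lam*s) ≤ (d:ℝ) * Real.log lam := by
      have h1 : lam * ‖x - ξ‖^2 / (2*s) - ‖x - ξ‖^2/(2*lam*s)
          = ‖x - ξ‖^2 * (lam^2 - 1) / (2*lam*s) := by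
        field_simp
      rw [h1]
      calc ‖x - ξ‖^2 * (lam^2 - 1) / (2*lam*s)
          ≤ (lam * d * Real.log lam / (lam^2 - 1) * s) * (lam^2 - 1) / (2*lam*s) := by
            gcongr
        _ = (d:ℝ) * Real.log lam / 2 := by field_simp
        _ ≤ (d:ℝ) * Real.log lam := by
            have : (0:ℝ) ≤ (d:ℝ) * Real.log lam := by positivity
            linarith
    have hexpc : Real.exp (-‖x - ξ‖^2/(2*lam*s)) ≤ lam^d * Real.exp (-‖x - ξ‖^2/(2*lam⁻¹*s)) := by
      have h2 : -‖x - ξ‖^2/(2*lam⁻¹*s) = -(lam * ‖x - ξ‖^2/(2*s)) := by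
        rw [neg_div, neg_inj, div_eq_div_iff (by positivity) (by positivity)]
        field_simp
      have h3 : -‖x - ξ‖^2/(2*lam*s) ≤ (d:ℝ) * Real.log lam + -‖x - ξ‖^2/(2*lam⁻¹*s) := by
        rw [h2, neg_div]; linarith [harg]
      calc Real.exp (-‖x - ξ‖^2/(2*lam*s))
          ≤ Real.exp ((d:ℝ) * Real.log lam + -‖x - ξ‖^2/(2*lam⁻¹*s)) := Real.exp_le_exp.2 h3
        _ = lam^d * Real.exp (-‖x - ξ‖^2/(2*lam⁻¹*s)) := by
            rw [Real.exp_add]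
            congr 1
            rw [show ((d:ℝ) * Real.log lam) = Real.log (lam^d) by
              rw [Real.log_pow], Real.exp_log (by positivity)]
    show heatK d lam s (x - ξ) ≤ heatK d lam⁻¹ s (x - ξ)
    rw [heatK, heatK]
    have hbase : 2 * π * lam * s = 2*π*(lam*s) := by ring
    rw [hbase, hsplit]
    calc ((lam:ℝ)^d)⁻¹ * (2*π*lam⁻¹*s) ^ (-(d:ℝ)/2) * Real.exp (-‖x - ξ‖^2/(2*lam*s))
        ≤ ((lam:ℝ)^d)⁻¹ * (2*π*lam⁻¹*s) ^ (-(d:ℝ)/2) *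
            (lam^d * Real.exp (-‖x - ξ‖^2/(2*lam⁻¹*s))) := by
          have hc : (0:ℝ) ≤ ((lam:ℝ)^d)⁻¹ * (2*π*lam⁻¹*s) ^ (-(d:ℝ)/2) := by positivity
          exact mul_le_mul_of_nonneg_left hexpc hc
      _ = (((lam:ℝ)^d)⁻¹ * lam^d) *
            ((2*π*lam⁻¹*s) ^ (-(d:ℝ)/2) * Real.exp (-‖x - ξ‖^2/(2*lam⁻¹*s))) := by ring
      _ = (2*π*lam⁻¹*s) ^ (-(d:ℝ)/2) * Real.exp (-‖x - ξ‖^2/(2*lam⁻¹*s)) := by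
          rw [inv_mul_cancel₀ ((by positivity : (0:ℝ) < lam^d).ne'), one_mul]
  -- bound on J
  have hJb : |Jker a b c t x τ ξ| ≤ (2 * lam^d)⁻¹ * G := by
    have hK : (0:ℝ) < 2 * C * lam^d := by positivity
    have hsB : s ≤ (2 * C * lam^d) ^ (-(2:ℝ)/al) := hTl.trans (min_le_left _ _)
    have hsal : s ^ (al/2) ≤ (2 * C * lam^d)⁻¹ := by
      calc s ^ (al/2) ≤ ((2 * C * lam^d) ^ (-(2:ℝ)/al)) ^ (al/2) :=
            Real.rpow_le_rpow hs.le hsB (div_nonneg hal.1.le (by norm_num))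
        _ = (2 * C * lam^d) ^ ((-(2:ℝ)/al) * (al/2)) := by
            rw [← Real.rpow_mul hK.le]
        _ = (2 * C * lam^d)⁻¹ := by
            rw [show (-(2:ℝ)/al) * (al/2) = -1 by
              field_simp [hal.1.ne'], Real.rpow_neg_one]
    have hCs : C * s ^ (al/2) ≤ (2 * lam^d)⁻¹ := by
      calc C * s ^ (al/2) ≤ C * (2 * C * lam^d)⁻¹ :=
            mul_le_mul_of_nonneg_left hsal hC.le
        _ = (2 * lam^d)⁻¹ := by
            field_simp
    calc |Jker a b c t x τ ξ| ≤ C * s ^ (al/2) * heatK d lam s (x - ξ) :=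
          hJ τ t hτ hlt hle x ξ
      _ ≤ C * s ^ (al/2) * G := by
          have : (0:ℝ) ≤ C * s ^ (al/2) := by positivity
          exact mul_le_mul_of_nonneg_left hHeat this
      _ ≤ (2 * lam^d)⁻¹ * G := mul_le_mul_of_nonneg_right hCs hGpos.le
  -- conclusion
  have hhalf : ((2:ℝ) * lam^d)⁻¹ = ((lam:ℝ)^d)⁻¹ - (2 * lam^d)⁻¹ := by
    have : (lam:ℝ)^d ≠ 0 := by positivity
    field_simp; ring
  rw [Gpar]
  have hJlow : -((2 * lam^d)⁻¹ * G) ≤ Jker a b c t x τ ξ := by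
    have := neg_abs_le (Jker a b c t x τ ξ)
    linarith [hJb]
  calc (2 * lam^d)⁻¹ * G = ((lam:ℝ)^d)⁻¹ * G - (2 * lam^d)⁻¹ * G := by
        rw [hhalf]; ring
    _ ≤ Zker a t x τ ξ + Jker a b c t x τ ξ := by linarith [hZ, hJlow]

end
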